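/- For perfect transmission T = 1 and atomic detection efficiency η_a = 0.9, there exist α > 0 and ν ∈ ℝ such that 0.9·√(c₁(α,1)²·sin²(2ν) + erf(α/√2)²) + 0.1·erf(α/√2)·cos(2ν) > 1; that is, with two homodyne measurements and 90% efficient atomic detection, a CHSH violation S_γ > 2 is achievable. -/

import Mathlib

open Real

/-- Error function `erf x = (2/√π)·∫₀ˣ e^{−t²} dt`. -/
noncomputable def erf (x : ℝ) : ℝ :=
  (2 / Real.sqrt π) * ∫ t in (0 : ℝ)..x, Real.exp (-t ^ 2)

/-- Homodyne binning parameter at transmission `T`: `b = π/(2√2·√T·α)`. -/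
noncomputable def bT (α T : ℝ) : ℝ := π / (2 * Real.sqrt 2 * (Real.sqrt T * α))

/-- Homodyne interference coefficient at transmission `T`:
`c₁(α,T) = e^{−(1−T)α²/2}·[(2/√π)·∫_{−b}^{b} e^{−x²} cos(√2 x √T α) dx − e^{−Tα²/2}]`. -/
noncomputable def c1T (α T : ℝ) : ℝ :=
  Real.exp (-(1 - T) * α ^ 2 / 2) *
    ((2 / Real.sqrt π) *
        (∫ x in (-bT α T)..(bT α T),
          Real.exp (-x ^ 2) * Real.cos (Real.sqrt 2 * x * (Real.sqrt T * α)))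
      - Real.exp (-T * α ^ 2 / 2))

/-! ### Auxiliary numeric lemmas -/

lemma sq2_lb : (1.414213:ℝ) ≤ Real.sqrt 2 := by
  have h := Real.sq_sqrt (by norm_num : (2:ℝ) ≥ 0)
  nlinarith [Real.sqrt_nonneg 2]

lemma sq2_ub : Real.sqrt 2 ≤ 1.414214 := by
  have h := Real.sq_sqrt (by norm_num : (2:ℝ) ≥ 0)
  nlinarith [Real.sqrt_nonneg 2]

lemma spi_ub : Real.sqrt π ≤ 1.772454 := by
  have h := Real.sq_sqrt Real.pi_pos.le
  nlinarith [Real.sqrt_nonneg π, Real.pi_lt_d6]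

lemma spi_pos : 0 < Real.sqrt π := Real.sqrt_pos.2 Real.pi_pos

lemma expq1 : (10000:ℝ)/7755 ≤ Real.exp (11449/45000) := by
  have h := Real.sum_le_exp_of_nonneg (by norm_num : (0:ℝ) ≤ 11449/45000) 6
  simp [Finset.sum_range_succ, Nat.factorial] at h
  norm_num at h ⊢
  linarith

lemma expq2 : (10000:ℝ)/3615 ≤ Real.exp (11449/11250) := by
  have h := Real.sum_le_exp_of_nonneg (by norm_num : (0:ℝ) ≤ 11449/11250) 11
  simp [Finset.sum_range_succ, Nat.factorial] at h
  norm_num at h ⊢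
  linarith

lemma expq3 : (10000:ℝ)/1014 ≤ Real.exp (11449/5000) := by
  have h := Real.sum_le_exp_of_nonneg (by norm_num : (0:ℝ) ≤ 11449/5000) 16
  simp [Finset.sum_range_succ, Nat.factorial] at h
  norm_num at h ⊢
  linarith

lemma E1_ub : Real.exp (-(11449/45000)) ≤ 0.7755 := by
  rw [Real.exp_neg]
  rw [inv_le_comm₀ (Real.exp_pos _) (by norm_num)]
  calc (0.7755:ℝ)⁻¹ ≤ 10000/7755 := by norm_num
    _ ≤ _ := expq1

lemma E2_ub : Real.exp (-(11449/11250)) ≤ 0.3615 := by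
  rw [Real.exp_neg]
  rw [inv_le_comm₀ (Real.exp_pos _) (by norm_num)]
  calc (0.3615:ℝ)⁻¹ ≤ 10000/3615 := by norm_num
    _ ≤ _ := expq2

lemma E3_ub : Real.exp (-(11449/5000)) ≤ 0.1014 := by
  rw [Real.exp_neg]
  rw [inv_le_comm₀ (Real.exp_pos _) (by norm_num)]
  calc (0.1014:ℝ)⁻¹ ≤ 10000/1014 := by norm_num
    _ ≤ _ := expq3

lemma exp_neg_lb (u : ℝ) (h0 : 0 ≤ u) (h1 : u ≤ 1) :
    1 - u + u^2/2 - 2*u^3/9 ≤ Real.exp (-u) := by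
  have h := Real.exp_bound (x := -u) (by rw [abs_neg, abs_of_nonneg h0]; exact h1)
    (by norm_num : 0 < 3)
  simp [Finset.sum_range_succ, Nat.factorial] at h
  rw [abs_of_nonneg h0] at h
  have := abs_le.1 h
  nlinarith [this.1, this.2]

/-! ### Exponential integral over an interval, and the secant lower bound -/

lemma integral_exp_affine (k c a b : ℝ) (hc : c ≠ 0) :
    ∫ t in a..b, Real.exp (k - c*t) = (Real.exp (k-c*a) - Real.exp (k-c*b))/c := by
  have h : ∀ t ∈ Set.uIcc a b,
      HasDerivAt (fun t => -Real.exp (k - c*t)/c) (Real.exp (k-c*t)) t := by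
    intro t _
    have h1 : HasDerivAt (fun t : ℝ => k - c*t) (-c) t := by
      simpa using ((hasDerivAt_id t).const_mul c).const_sub k
    have h2 := (Real.hasDerivAt_exp (k - c*t)).comp t h1
    have h3 := (h2.div_const c).neg
    have he : Real.exp (k - c*t) = -(Real.exp (k - c*t) * -c / c) := by
      field_simp
    convert h3 using 2
    · rfl
    · rfl
    all_goals simp [Function.comp, neg_div]
    all_goals field_simp
  rw [intervalIntegral.integral_eq_sub_of_hasDerivAt h
    ((Real.continuous_exp.comp (by continuity)).intervalIntegrable _ _)]
  ring

lemma piece_lb (a b : ℝ) (h0 : 0 ≤ a) (hab : a < b) :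
    (Real.exp (-a^2) - Real.exp (-b^2))/(a+b) ≤ ∫ t in a..b, Real.exp (-t^2) := by
  have hc : 0 < a + b := by linarith
  have key : ∫ t in a..b, Real.exp (a*b - (a+b)*t)
      = (Real.exp (-a^2) - Real.exp (-b^2))/(a+b) := by
    rw [integral_exp_affine _ _ _ _ hc.ne']
    ring_nf
  rw [← key]
  apply intervalIntegral.integral_mono_on hab.le
    ((Real.continuous_exp.comp (by continuity)).intervalIntegrable _ _)
    ((Real.continuous_exp.comp (by continuity)).intervalIntegrable _ _)
  intro t ht
  show Real.exp (a*b - (a+b)*t) ≤ Real.exp (-t^2)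
  exact Real.exp_le_exp.2 (by nlinarith [mul_nonneg (sub_nonneg.2 ht.1) (sub_nonneg.2 ht.2)])

/-! ### Polynomial minorant of the interference integrand -/

noncomputable def Ppoly (x : ℝ) : ℝ :=
  1 - (13949/2500)*x^2 + (385059601/50000000)*x^4 - (2310126409/450000000)*x^6
    + (2095636409/900000000)*x^8 - (131079601/112500000)*x^10

lemma hasDerivAt_Q (y : ℝ) :
    HasDerivAt (fun x : ℝ => id x - 13949/2500/3*x^3 + 385059601/50000000/5*x^5
      - 2310126409/450000000/7*x^7 + 2095636409/900000000/9*x^9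
      - 131079601/112500000/11*x^11) (Ppoly y) y := by
  have h1 := ((hasDerivAt_pow 3 y).const_mul ((13949:ℝ)/2500/3))
  have h2 := ((hasDerivAt_pow 5 y).const_mul ((385059601:ℝ)/50000000/5))
  have h3 := ((hasDerivAt_pow 7 y).const_mul ((2310126409:ℝ)/450000000/7))
  have h4 := ((hasDerivAt_pow 9 y).const_mul ((2095636409:ℝ)/900000000/9))
  have h5 := ((hasDerivAt_pow 11 y).const_mul ((131079601:ℝ)/112500000/11))
  have h0 := hasDerivAt_id y
  have key := ((((h0.sub h1).add h2).sub h3).add h4).sub h5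
  convert key using 1
  · rfl
  · rfl
  · rfl
  unfold Ppoly
  push_cast
  ring

lemma continuous_Ppoly : Continuous Ppoly := by
  unfold Ppoly
  fun_prop

lemma integral_Ppoly_ge :
    (0.62036 : ℝ) ≤ ∫ x in (-(519/1000) : ℝ)..(519/1000), Ppoly x := by
  rw [intervalIntegral.integral_eq_sub_of_hasDerivAt (fun y _ => hasDerivAt_Q y)]
  · norm_num
  · exact continuous_Ppoly.intervalIntegrable _ _

lemma pointwise_lb (x : ℝ) (hx : x ∈ Set.Icc (-(519/1000):ℝ) (519/1000)) :
    Ppoly x ≤ Real.exp (-x^2) * Real.cos (Real.sqrt 2 * x * (107/50)) := by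
  obtain ⟨hxl, hxr⟩ := hx
  have hu1 : x^2 ≤ (519/1000)^2 := by nlinarith
  have hexp : 1 - x^2 + x^4/2 - 2*x^6/9 ≤ Real.exp (-x^2) := by
    have := exp_neg_lb (x^2) (sq_nonneg x) (by nlinarith)
    calc 1 - x^2 + x^4/2 - 2*x^6/9 = 1 - x^2 + (x^2)^2/2 - 2*(x^2)^3/9 := by ring
    _ ≤ _ := this
  have hx4 : x^4 ≤ (519/1000)^2 * x^2 := by
    nlinarith [mul_nonneg (sub_nonneg.2 hu1) (sq_nonneg x)]
  have hx6 : x^6 ≤ (519/1000)^2 * x^4 := by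
    nlinarith [mul_nonneg (sub_nonneg.2 hu1) (sq_nonneg (x^2))]
  have hp0 : (0:ℝ) ≤ 1 - x^2 + x^4/2 - 2*x^6/9 := by
    nlinarith [sq_nonneg x, sq_nonneg (x^2)]
  set z := Real.sqrt 2 * x * (107/50) with hzdef
  have hz2 : z^2 = 2*(11449/2500)*x^2 := by
    rw [hzdef, mul_pow, mul_pow, Real.sq_sqrt (by norm_num : (0:ℝ) ≤ 2)]
    ring
  have hs2 := sq2_lb
  have hs2' := sq2_ub
  have hzu : z ≤ 1.570711 := by
    rcases le_or_gt 0 x with hx0 | hx0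
    · nlinarith
    · nlinarith
  have hzl : -1.570711 ≤ z := by
    rcases le_or_gt 0 x with hx0 | hx0
    · nlinarith
    · nlinarith
  have hpi := Real.pi_gt_d6
  have hcos0 : 0 ≤ Real.cos z :=
    Real.cos_nonneg_of_mem_Icc ⟨by linarith, by linarith⟩
  have hcosq : 1 - z^2/2 + z^4/32 ≤ Real.cos z := by
    have hhalf := Real.one_sub_sq_div_two_le_cos (x := z/2)
    have h8 : (0:ℝ) ≤ 1 - z^2/8 := by nlinarith
    have hdbl : Real.cos z = 2*(Real.cos (z/2))^2 - 1 := by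
      rw [show z = 2*(z/2) by ring, Real.cos_two_mul]
      ring_nf
    rw [hdbl]
    nlinarith [hhalf, h8]
  have hq : 1 - z^2/2 + z^4/32
      = 1 - (11449/2500)*x^2 + ((11449/2500)^2/8)*x^4 := by
    rw [show z^4 = (z^2)^2 by ring, hz2]; ring
  set q : ℝ := 1 - (11449/2500)*x^2 + ((11449/2500)^2/8)*x^4 with hqdef
  have hcosq' : q ≤ Real.cos z := by rw [← hq]; exact hcosq
  have hPpq : Ppoly x ≤ (1 - x^2 + x^4/2 - 2*x^6/9) * q := by
    have h10 : (0:ℝ) ≤ x^10 := by positivity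
    have hd : (1 - x^2 + x^4/2 - 2*x^6/9) * q - Ppoly x = (11449/2500)^2/36 * x^10 := by
      rw [hqdef]; unfold Ppoly; ring
    linarith
  rcases le_or_gt 0 q with hq0 | hq0
  · calc Ppoly x ≤ (1 - x^2 + x^4/2 - 2*x^6/9) * q := hPpq
      _ ≤ Real.exp (-x^2) * q := mul_le_mul_of_nonneg_right hexp hq0
      _ ≤ Real.exp (-x^2) * Real.cos z := mul_le_mul_of_nonneg_left hcosq' (Real.exp_pos _).le
  · calc Ppoly x ≤ (1 - x^2 + x^4/2 - 2*x^6/9) * q := hPpq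
      _ ≤ 0 := mul_nonpos_of_nonneg_of_nonpos hp0 hq0.le
      _ ≤ Real.exp (-x^2) * Real.cos z := by positivity

/-! ### Lower bound on `erf (2.14/√2)` -/

lemma two_div_spi_lb : (1.1283:ℝ) ≤ 2/Real.sqrt π := by
  have hspi := spi_ub
  have hspip := spi_pos
  rw [le_div_iff₀ hspip]
  linarith

lemma erf_lb : (0.927:ℝ) ≤ erf ((107/50) / Real.sqrt 2) := by
  set x : ℝ := (107/50) / Real.sqrt 2 with hxdef
  have hs2 := sq2_lb
  have hs2' := sq2_ub
  have hs2pos : (0:ℝ) < Real.sqrt 2 := by linarith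
  have hxpos : 0 < x := by positivity
  have hx2 : x^2 = 11449/5000 := by
    rw [hxdef, div_pow, Real.sq_sqrt (by norm_num : (0:ℝ) ≤ 2)]
    norm_num
  have hxu : x ≤ 1.51321 := by
    rw [hxdef, div_le_iff₀ hs2pos]
    nlinarith
  -- split the integral
  have hcont : Continuous (fun t : ℝ => Real.exp (-t^2)) :=
    Real.continuous_exp.comp (by continuity)
  have hint : ∀ a b : ℝ, IntervalIntegrable (fun t : ℝ => Real.exp (-t^2)) MeasureTheory.volume a b :=
    fun a b => hcont.intervalIntegrable a b
  have hsplit : ∫ t in (0:ℝ)..x, Real.exp (-t^2)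
      = (∫ t in (0:ℝ)..(x/3), Real.exp (-t^2)) + (∫ t in (x/3)..(2*x/3), Real.exp (-t^2))
        + (∫ t in (2*x/3)..x, Real.exp (-t^2)) := by
    rw [intervalIntegral.integral_add_adjacent_intervals (hint 0 (x/3)) (hint (x/3) (2*x/3)),
      intervalIntegral.integral_add_adjacent_intervals (hint 0 (2*x/3)) (hint (2*x/3) x)]
  have hP1 := piece_lb 0 (x/3) le_rfl (by positivity)
  have hP2 := piece_lb (x/3) (2*x/3) (by positivity) (by nlinarith)
  have hP3 := piece_lb (2*x/3) x (by positivity) (by nlinarith)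
  have ha1 : ((x/3):ℝ)^2 = 11449/45000 := by rw [div_pow, hx2]; norm_num
  have ha2 : ((2*x/3):ℝ)^2 = 11449/11250 := by rw [mul_div_assoc, mul_pow, div_pow, hx2]; norm_num
  rw [ha1] at hP1 hP2
  rw [ha2] at hP2 hP3
  rw [hx2] at hP3
  have hE1 := E1_ub
  have hE2 := E2_ub
  have hE3 := E3_ub
  have hE1' : (0:ℝ) < Real.exp (-(11449/45000)) := Real.exp_pos _
  have hE2' : (0:ℝ) < Real.exp (-(11449/11250)) := Real.exp_pos _
  have hE3' : (0:ℝ) < Real.exp (-(11449/5000)) := Real.exp_pos _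
  -- lower bound for the full integral
  have hJ : (0.41452:ℝ)/(x/3) ≤ ∫ t in (0:ℝ)..x, Real.exp (-t^2) := by
    rw [hsplit]
    have e0 : Real.exp (-(0:ℝ)^2) = 1 := by norm_num
    rw [e0] at hP1
    have hb1 : (1 - Real.exp (-(11449/45000)))/(0 + x/3)
        = (1 - Real.exp (-(11449/45000)))*3/x := by field_simp; ring
    have hb2 : (Real.exp (-(11449/45000)) - Real.exp (-(11449/11250)))/(x/3 + 2*x/3)
        = (Real.exp (-(11449/45000)) - Real.exp (-(11449/11250)))/x := by
      rw [show x/3 + 2*x/3 = x by ring]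
    have hb3 : (Real.exp (-(11449/11250)) - Real.exp (-(11449/5000)))/(2*x/3 + x)
        = (Real.exp (-(11449/11250)) - Real.exp (-(11449/5000)))*3/(5*x) := by
      rw [show 2*x/3 + x = 5*x/3 by ring]; field_simp
    rw [hb1] at hP1; rw [hb2] at hP2; rw [hb3] at hP3
    have hcomb : (1 - Real.exp (-(11449/45000)))*3/x
          + (Real.exp (-(11449/45000)) - Real.exp (-(11449/11250)))/x
          + (Real.exp (-(11449/11250)) - Real.exp (-(11449/5000)))*3/(5*x)
        = (3 - 2*Real.exp (-(11449/45000)) - (2/5)*Real.exp (-(11449/11250))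
            - (3/5)*Real.exp (-(11449/5000)))/x := by
      field_simp
      ring
    have hnum : (1.24356:ℝ) ≤ 3 - 2*Real.exp (-(11449/45000))
        - (2/5)*Real.exp (-(11449/11250)) - (3/5)*Real.exp (-(11449/5000)) := by
      linarith
    have hx3 : (0.41452:ℝ)/(x/3) = 1.24356/x := by
      rw [div_div_eq_mul_div]; norm_num
    rw [hx3]
    calc (1.24356:ℝ)/x ≤ (3 - 2*Real.exp (-(11449/45000)) - (2/5)*Real.exp (-(11449/11250))
          - (3/5)*Real.exp (-(11449/5000)))/x := (div_le_div_iff_of_pos_right hxpos).2 hnum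
      _ = _ := hcomb.symm
      _ ≤ _ := by linarith
  -- conclude
  unfold erf
  have hspi := spi_ub
  have hspip := spi_pos
  have h2spi := two_div_spi_lb
  calc (0.927:ℝ) ≤ 1.1283 * (0.41452/(1.51321/3)) := by norm_num
    _ ≤ (2/Real.sqrt π) * (0.41452/(x/3)) := by
        apply mul_le_mul h2spi _ (by positivity) (by positivity)
        apply div_le_div_of_nonneg_left (by norm_num) (by positivity) (by linarith)
    _ ≤ (2/Real.sqrt π) * ∫ t in (0:ℝ)..x, Real.exp (-t^2) := by
        apply mul_le_mul_of_nonneg_left hJ (by positivity)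

/-! ### Lower bound on `c1T 2.14 1` -/

lemma c1_lb : (0.598:ℝ) ≤ c1T (107/50) 1 := by
  unfold c1T bT
  rw [Real.sqrt_one, one_mul]
  set b : ℝ := π / (2 * Real.sqrt 2 * (107/50)) with hbdef
  have hs2 := sq2_lb
  have hs2' := sq2_ub
  have hs2pos : (0:ℝ) < Real.sqrt 2 := by linarith
  have hpi := Real.pi_gt_d6
  have hpi' := Real.pi_lt_d6
  have hbpos : 0 < b := by positivity
  have hrb : (519/1000 : ℝ) ≤ b := by
    rw [hbdef, le_div_iff₀ (by positivity)]
    nlinarith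
  have hkey : Real.sqrt 2 * b * (107/50) = π/2 := by
    rw [hbdef]
    field_simp
  -- nonnegativity of the integrand for |u| ≤ b
  have hnn : ∀ u : ℝ, -b ≤ u → u ≤ b →
      0 ≤ Real.exp (-u^2) * Real.cos (Real.sqrt 2 * u * (107/50)) := by
    intro u hu1 hu2
    apply mul_nonneg (Real.exp_pos _).le
    apply Real.cos_nonneg_of_mem_Icc
    constructor
    · rw [← hkey]; nlinarith
    · rw [← hkey]; nlinarith
  have hcont : Continuous (fun u : ℝ => Real.exp (-u^2) * Real.cos (Real.sqrt 2 * u * (107/50))) := by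
    apply Continuous.mul
    · exact Real.continuous_exp.comp (by continuity)
    · exact Real.continuous_cos.comp (by continuity)
  have hint : ∀ a c : ℝ, IntervalIntegrable
      (fun u : ℝ => Real.exp (-u^2) * Real.cos (Real.sqrt 2 * u * (107/50)))
      MeasureTheory.volume a c := fun a c => hcont.intervalIntegrable a c
  have hsplit : ∫ u in (-b)..b, Real.exp (-u^2) * Real.cos (Real.sqrt 2 * u * (107/50))
      = (∫ u in (-b)..(-(519/1000)), Real.exp (-u^2) * Real.cos (Real.sqrt 2 * u * (107/50)))
        + (∫ u in (-(519/1000))..(519/1000), Real.exp (-u^2) * Real.cos (Real.sqrt 2 * u * (107/50)))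
        + (∫ u in (519/1000 : ℝ)..b, Real.exp (-u^2) * Real.cos (Real.sqrt 2 * u * (107/50))) := by
    rw [intervalIntegral.integral_add_adjacent_intervals (hint (-b) (-(519/1000)))
      (hint (-(519/1000)) (519/1000)),
      intervalIntegral.integral_add_adjacent_intervals (hint (-b) (519/1000)) (hint (519/1000) b)]
  have hI1 : 0 ≤ ∫ u in (-b)..(-(519/1000)),
      Real.exp (-u^2) * Real.cos (Real.sqrt 2 * u * (107/50)) := by
    apply intervalIntegral.integral_nonneg (by linarith)
    intro u hu
    exact hnn u hu.1 (by linarith [hu.2])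
  have hI3 : 0 ≤ ∫ u in (519/1000 : ℝ)..b,
      Real.exp (-u^2) * Real.cos (Real.sqrt 2 * u * (107/50)) := by
    apply intervalIntegral.integral_nonneg (by linarith)
    intro u hu
    exact hnn u (by linarith [hu.1]) hu.2
  have hI2 : (0.62036:ℝ) ≤ ∫ u in (-(519/1000) : ℝ)..(519/1000),
      Real.exp (-u^2) * Real.cos (Real.sqrt 2 * u * (107/50)) := by
    refine le_trans integral_Ppoly_ge ?_
    apply intervalIntegral.integral_mono_on (by norm_num)
      (continuous_Ppoly.intervalIntegrable _ _)
      (hint _ _)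
    exact pointwise_lb
  have hI : (0.62036:ℝ) ≤ ∫ u in (-b)..b,
      Real.exp (-u^2) * Real.cos (Real.sqrt 2 * u * (107/50)) := by
    rw [hsplit]; linarith
  have hE3 := E3_ub
  have hexp0 : Real.exp (-(1-1) * (107/50:ℝ)^2/2) = 1 := by norm_num
  have hexp1 : Real.exp (-1 * (107/50:ℝ)^2/2) = Real.exp (-(11449/5000)) := by norm_num
  rw [hexp0, hexp1, one_mul]
  have hspi := spi_ub
  have hspip := spi_pos
  have h2spi := two_div_spi_lb
  have hfac : (0.6999:ℝ) ≤ (2/Real.sqrt π) * ∫ u in (-b)..b,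
      Real.exp (-u^2) * Real.cos (Real.sqrt 2 * u * (107/50)) := by
    calc (0.6999:ℝ) ≤ 1.1283 * 0.62036 := by norm_num
      _ ≤ (2/Real.sqrt π) * ∫ u in (-b)..b,
            Real.exp (-u^2) * Real.cos (Real.sqrt 2 * u * (107/50)) :=
        mul_le_mul h2spi hI (by norm_num) (by positivity)
  linarith

/-! ### Trigonometric bounds at ν = 3/5 -/

lemma sin_35_lb : (0.55725:ℝ) ≤ Real.sin (3/5) := by
  have h := Real.sin_bound (x := 3/5) (by rw [abs_of_nonneg] <;> norm_num)
  rw [abs_of_nonneg (by norm_num : (0:ℝ) ≤ 3/5)] at h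
  have := abs_le.1 h
  have h1 := this.1
  norm_num at h1 ⊢
  linarith

lemma cos_35_lb : (0.82405:ℝ) ≤ Real.cos (3/5) := by
  have hhalf := Real.one_sub_sq_div_two_le_cos (x := 3/10)
  have hdbl : Real.cos (3/5) = 2*(Real.cos (3/10))^2 - 1 := by
    rw [show (3/5:ℝ) = 2*(3/10) by norm_num, Real.cos_two_mul]
  rw [hdbl]
  nlinarith [hhalf]

lemma cos_35_ub : Real.cos (3/5) ≤ 1 := Real.cos_le_one _

/-! ### Main theorem -/

/-- At perfect transmission `T = 1` with atomic detection efficiency `η_a = 0.9`, there exist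
`α > 0` and `ν` such that
`0.9·√(c₁(α,1)²·sin²(2ν) + erf(α/√2)²) + 0.1·erf(α/√2)·cos(2ν) > 1`, i.e. the two-homodyne
Bell test with 90% efficient atomic detection achieves `S_γ > 2`. -/
theorem two_homodyne_violation_atomic_efficiency_0_9 :
    ∃ α > (0 : ℝ), ∃ ν : ℝ,
      0.9 * Real.sqrt ((c1T α 1) ^ 2 * Real.sin (2 * ν) ^ 2
          + (erf (α / Real.sqrt 2)) ^ 2)
        + 0.1 * erf (α / Real.sqrt 2) * Real.cos (2 * ν) > 1 := by
  refine ⟨107/50, by norm_num, 3/5, ?_⟩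
  have hC := c1_lb
  have hE := erf_lb
  have hsin := sin_35_lb
  have hcos := cos_35_lb
  have hcos1 := cos_35_ub
  have hsin2 : (0.918:ℝ) ≤ Real.sin (2*(3/5)) := by
    rw [Real.sin_two_mul]
    nlinarith [Real.sin_le_one (3/5 : ℝ)]
  have hcos2 : (0.358:ℝ) ≤ Real.cos (2*(3/5)) := by
    rw [Real.cos_two_mul]
    nlinarith
  have hsin2' : Real.sin (2*(3/5)) ≤ 1 := Real.sin_le_one _
  have hCS : (0.598*0.918:ℝ)^2 ≤ (c1T (107/50) 1)^2 * Real.sin (2*(3/5))^2 := by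
    have h1 : (0.598*0.918:ℝ) ≤ c1T (107/50) 1 * Real.sin (2*(3/5)) := by nlinarith
    nlinarith
  have hE2 : (0.927:ℝ)^2 ≤ (erf ((107/50) / Real.sqrt 2))^2 := by nlinarith
  have hsq : (1.0773:ℝ) ≤ Real.sqrt ((c1T (107/50) 1)^2 * Real.sin (2*(3/5))^2
      + (erf ((107/50) / Real.sqrt 2))^2) := by
    have harg : (1.0773:ℝ)^2 ≤ (c1T (107/50) 1)^2 * Real.sin (2*(3/5))^2
        + (erf ((107/50) / Real.sqrt 2))^2 := by nlinarith
    have := Real.sqrt_le_sqrt harg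
    rwa [Real.sqrt_sq (by norm_num : (0:ℝ) ≤ 1.0773)] at this
  have hEK : (0.927*0.358:ℝ) ≤ erf ((107/50) / Real.sqrt 2) * Real.cos (2*(3/5)) := by
    nlinarith
  norm_num at hsq hEK ⊢
  nlinarith [hsq, hEK]
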